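/- Let F ⊂ ℝⁿ be a self-similar set satisfying the strong open set condition with feasible open set O (so F ∩ O ≠ ∅), and let μ be the normalized d-dimensional Hausdorff measure on F. Then for every p ∈ ℕ, ∫_F |ln dist(y, ∂O)|^p dμ(y) < ∞. In particular H^d(F ∩ ∂O) = 0. -/

import Mathlib

open MeasureTheory Metric



open scoped RealInnerProductSpace in
lemma similarity_surjective {n : ℕ} {f : EuclideanSpace ℝ (Fin n) → EuclideanSpace ℝ (Fin n)}
    {r : ℝ} (hr : 0 < r) (hf : ∀ x y, dist (f x) (f y) = r * dist x y) :
    Function.Surjective f := by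
  set T : EuclideanSpace ℝ (Fin n) → EuclideanSpace ℝ (Fin n) :=
    fun x => r⁻¹ • (f x - f 0) with hT
  have hTd : ∀ x y, ‖T x - T y‖ = ‖x - y‖ := by
    intro x y
    have h1 : T x - T y = r⁻¹ • (f x - f y) := by
      simp only [hT, ← smul_sub]; congr 1; abel
    rw [h1, norm_smul, ← dist_eq_norm (f x), hf, ← dist_eq_norm]
    rw [norm_inv, Real.norm_eq_abs, abs_of_pos hr, ← mul_assoc, inv_mul_cancel₀ hr.ne', one_mul]
  have hTn : ∀ x, ‖T x‖ = ‖x‖ := by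
    intro x
    have := hTd x 0
    simpa [hT] using this
  have hTi : ∀ x y, ⟪T x, T y⟫ = ⟪x, y⟫ := by
    intro x y
    rw [real_inner_eq_norm_mul_self_add_norm_mul_self_sub_norm_sub_mul_self_div_two,
      real_inner_eq_norm_mul_self_add_norm_mul_self_sub_norm_sub_mul_self_div_two x y,
      hTn, hTn, hTd]
  have hadd : ∀ x y, T (x + y) = T x + T y := by
    intro x y
    have h0 : ⟪T (x+y) - (T x + T y), T (x+y) - (T x + T y)⟫ = (0:ℝ) := by
      simp only [inner_sub_left, inner_sub_right, inner_add_left, inner_add_right, hTi]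
      ring
    rw [inner_self_eq_zero, sub_eq_zero] at h0
    exact h0
  have hsmul : ∀ (c : ℝ) (x), T (c • x) = c • T x := by
    intro c x
    have h0 : ⟪T (c • x) - c • T x, T (c • x) - c • T x⟫ = (0:ℝ) := by
      simp only [inner_sub_left, inner_sub_right, real_inner_smul_left,
        real_inner_smul_right, hTi]
      ring
    rw [inner_self_eq_zero, sub_eq_zero] at h0
    exact h0
  let L : EuclideanSpace ℝ (Fin n) →ₗ[ℝ] EuclideanSpace ℝ (Fin n) :=
    { toFun := T, map_add' := hadd, map_smul' := hsmul }
  have hinj : Function.Injective L := by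
    intro a b hab
    have h2 := hTd a b
    have h3 : T a = T b := hab
    rw [h3, sub_self, norm_zero] at h2
    exact sub_eq_zero.mp (by rw [← norm_eq_zero, ← h2])
  have hsurj : Function.Surjective L := LinearMap.injective_iff_surjective.1 hinj
  intro y
  obtain ⟨x, hx⟩ := hsurj (r⁻¹ • (y - f 0))
  refine ⟨x, ?_⟩
  have h4 : T x = r⁻¹ • (y - f 0) := hx
  have h5 : r • T x = f x - f 0 := by
    rw [hT]; simp [smul_smul, mul_inv_cancel₀ hr.ne']
  rw [h4, smul_smul, mul_inv_cancel₀ hr.ne', one_smul] at h5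
  have h6 : f x - f 0 = y - f 0 := h5.symm
  have : f x = y := by
    have := congrArg (fun v => v + f 0) h6
    simpa using this
  exact this


def compL {n N : ℕ} (S : Fin N → EuclideanSpace ℝ (Fin n) → EuclideanSpace ℝ (Fin n)) :
    List (Fin N) → EuclideanSpace ℝ (Fin n) → EuclideanSpace ℝ (Fin n)
  | [] => id
  | i :: l => S i ∘ compL S l

lemma compL_dist {n N : ℕ} {S : Fin N → EuclideanSpace ℝ (Fin n) → EuclideanSpace ℝ (Fin n)}
    {r : Fin N → ℝ} (hsim : ∀ i x y, dist (S i x) (S i y) = r i * dist x y) :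
    ∀ (l : List (Fin N)) (x y), dist (compL S l x) (compL S l y) = (l.map r).prod * dist x y := by
  intro l
  induction l with
  | nil => intro x y; simp [compL]
  | cons i l ih =>
    intro x y
    simp only [compL, Function.comp_apply, List.map_cons, List.prod_cons]
    rw [hsim, ih, mul_assoc]

lemma compL_surj {n N : ℕ} {S : Fin N → EuclideanSpace ℝ (Fin n) → EuclideanSpace ℝ (Fin n)}
    {r : Fin N → ℝ} (hr : ∀ i, 0 < r i)
    (hsim : ∀ i x y, dist (S i x) (S i y) = r i * dist x y) :
    ∀ l : List (Fin N), Function.Surjective (compL S l) := by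
  intro l
  induction l with
  | nil => exact fun y => ⟨y, rfl⟩
  | cons i l ih =>
    exact (similarity_surjective (hr i) (hsim i)).comp ih

lemma compL_image_subset {n N : ℕ} {S : Fin N → EuclideanSpace ℝ (Fin n) → EuclideanSpace ℝ (Fin n)}
    {A : Set (EuclideanSpace ℝ (Fin n))} (h : ∀ i, S i '' A ⊆ A) :
    ∀ l : List (Fin N), compL S l '' A ⊆ A := by
  intro l
  induction l with
  | nil => simp [compL]
  | cons i l ih =>
    calc compL S (i :: l) '' A = S i '' (compL S l '' A) := by
          show (S i ∘ compL S l) '' A = _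
          rw [Set.image_comp]
      _ ⊆ S i '' A := Set.image_mono ih
      _ ⊆ A := h i

lemma compL_prod_le {N : ℕ} {r : Fin N → ℝ} {θ : ℝ} (h0 : ∀ i, 0 ≤ r i) (hθ : ∀ i, r i ≤ θ) :
    ∀ l : List (Fin N), (l.map r).prod ≤ θ ^ l.length := by
  intro l
  induction l with
  | nil => simp
  | cons i l ih =>
    simp only [List.map_cons, List.prod_cons, List.length_cons, pow_succ]
    rw [mul_comm (θ ^ l.length) θ]
    apply mul_le_mul (hθ i) ih (List.prod_nonneg ?_) ((h0 i).trans (hθ i))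
    intro a ha
    obtain ⟨j, _, rfl⟩ := List.mem_map.1 ha
    exact h0 j

lemma compL_le_prod {N : ℕ} {r : Fin N → ℝ} {c : ℝ} (hc : 0 ≤ c) (h : ∀ i, c ≤ r i) :
    ∀ l : List (Fin N), c ^ l.length ≤ (l.map r).prod := by
  intro l
  induction l with
  | nil => simp
  | cons i l ih =>
    simp only [List.map_cons, List.prod_cons, List.length_cons, pow_succ]
    rw [mul_comm (c ^ l.length) c]
    exact mul_le_mul (h i) ih (pow_nonneg hc _) ((hc.trans (h i)).trans (le_refl _))

lemma compL_prod_pos {N : ℕ} {r : Fin N → ℝ} (h : ∀ i, 0 < r i) :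
    ∀ l : List (Fin N), 0 < (l.map r).prod := by
  intro l
  induction l with
  | nil => simp
  | cons i l ih => simp only [List.map_cons, List.prod_cons]; exact mul_pos (h i) ih

lemma subset_iUnion_words {n N : ℕ} {S : Fin N → EuclideanSpace ℝ (Fin n) → EuclideanSpace ℝ (Fin n)}
    {F : Set (EuclideanSpace ℝ (Fin n))} (hFsub : F ⊆ ⋃ i, S i '' F) :
    ∀ m : ℕ, F ⊆ ⋃ w : Fin m → Fin N, compL S (List.ofFn w) '' F := by
  intro m
  induction m with
  | zero =>
    intro y hy
    exact Set.mem_iUnion.2 ⟨fun i => i.elim0, by simpa [List.ofFn_zero, compL] using hy⟩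
  | succ m ih =>
    intro y hy
    obtain ⟨_, ⟨i, rfl⟩, z, hzF, rfl⟩ := hFsub hy
    obtain ⟨_, ⟨w, rfl⟩, x', hx', rfl⟩ := ih hzF
    refine Set.mem_iUnion.2 ⟨Fin.cons i w, ⟨x', hx', ?_⟩⟩
    rw [List.ofFn_succ]
    simp [compL, Fin.cons_zero, Fin.cons_succ]

lemma compL_ofFn_prod {N : ℕ} {r : Fin N → ℝ} {m : ℕ} (w : Fin m → Fin N) :
    ((List.ofFn w).map r).prod = ∏ j, r (w j) := by
  rw [List.map_ofFn, List.prod_ofFn]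
  rfl
lemma infDist_frontier_le_dist {n : ℕ} {O : Set (EuclideanSpace ℝ (Fin n))} (hO : IsOpen O)
    {z b : EuclideanSpace ℝ (Fin n)} (hz : z ∈ closure O) (hb : b ∉ O) :
    infDist z (frontier O) ≤ dist z b := by
  by_cases hzO : z ∈ O
  · by_cases hbc : b ∈ closure O
    · exact infDist_le_dist_of_mem (by rw [hO.frontier_eq]; exact ⟨hbc, hb⟩)
    · by_cases hex : ∃ c ∈ segment ℝ z b, c ∈ frontier O
      · obtain ⟨c, hc, hcf⟩ := hex
        have h3 := dist_add_dist_of_mem_segment hc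
        have h4 : (0:ℝ) ≤ dist c b := dist_nonneg
        calc infDist z (frontier O) ≤ dist z c := infDist_le_dist_of_mem hcf
          _ ≤ dist z b := by linarith
      · exfalso
        push_neg at hex
        have hpre : IsPreconnected (segment ℝ z b) := (convex_segment z b).isPreconnected
        have hsub : segment ℝ z b ⊆ O ∪ (closure O)ᶜ := by
          intro c hc
          by_cases h1 : c ∈ closure O
          · by_cases h2 : c ∈ O
            · exact Or.inl h2
            · exact absurd (by rw [hO.frontier_eq]; exact ⟨h1, h2⟩) (hex c hc)
          · exact Or.inr h1
        obtain ⟨c, _, hcO, hcc⟩ := hpre O (closure O)ᶜ hO isClosed_closure.isOpen_compl hsub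
          ⟨z, left_mem_segment ℝ z b, hzO⟩ ⟨b, right_mem_segment ℝ z b, hbc⟩
        exact hcc (subset_closure hcO)
  · have hzfr : z ∈ frontier O := by rw [hO.frontier_eq]; exact ⟨hz, hzO⟩
    rw [infDist_zero_of_mem hzfr]
    exact dist_nonneg

lemma attractor_subset_closure {n N : ℕ}
    {S : Fin N → EuclideanSpace ℝ (Fin n) → EuclideanSpace ℝ (Fin n)}
    {r : Fin N → ℝ} {θ : ℝ} (hθ1 : θ < 1) (hθ0 : 0 ≤ θ) (hr : ∀ i, 0 ≤ r i) (hrθ : ∀ i, r i ≤ θ)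
    (hsim : ∀ i x y, dist (S i x) (S i y) = r i * dist x y)
    {F O : Set (EuclideanSpace ℝ (Fin n))} (hFb : Bornology.IsBounded F)
    (hFsub : F ⊆ ⋃ i, S i '' F)
    (hOsub : ∀ i, S i '' O ⊆ O) {x₀ : EuclideanSpace ℝ (Fin n)} (hx₀F : x₀ ∈ F) (hx₀O : x₀ ∈ O) :
    F ⊆ closure O := by
  intro y hy
  rw [Metric.mem_closure_iff]
  intro ε hε
  obtain ⟨k, hk⟩ : ∃ k : ℕ, θ ^ k * diam F < ε := by
    rcases eq_or_lt_of_le (diam_nonneg (s := F)) with h | h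
    · exact ⟨0, by rw [pow_zero, one_mul, ← h]; exact hε⟩
    · obtain ⟨k, hk⟩ := exists_pow_lt_of_lt_one (div_pos hε h) hθ1
      exact ⟨k, by rwa [lt_div_iff₀ h] at hk⟩
  obtain ⟨_, ⟨w, rfl⟩, z, hzF, rfl⟩ := subset_iUnion_words hFsub k hy
  refine ⟨compL S (List.ofFn w) x₀, compL_image_subset hOsub _ ⟨x₀, hx₀O, rfl⟩, ?_⟩
  rw [compL_dist hsim]
  calc ((List.ofFn w).map r).prod * dist z x₀
      ≤ θ ^ k * diam F := by
        apply mul_le_mul (by simpa using compL_prod_le hr hrθ (List.ofFn w))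
          (dist_le_diam_of_mem hFb hzF hx₀F) dist_nonneg (pow_nonneg hθ0 _)
    _ < ε := hk

set_option maxHeartbeats 1000000 in
/-- under the strong open set condition, all logarithmic moments of the
distance to ∂O are finite with respect to the normalized d-dimensional Hausdorff
measure on the self-similar set F; in particular H^d(F ∩ ∂O) = 0. -/
theorem log_distance_moments_finite {n N : ℕ} (hN : 0 < N)
    (S : Fin N → EuclideanSpace ℝ (Fin n) → EuclideanSpace ℝ (Fin n))
    (r : Fin N → ℝ) (hr : ∀ i, r i ∈ Set.Ioo (0 : ℝ) 1)
    (hsim : ∀ i x y, dist (S i x) (S i y) = r i * dist x y)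
    (F : Set (EuclideanSpace ℝ (Fin n))) (hFcomp : IsCompact F) (hFne : F.Nonempty)
    (hFinv : F = ⋃ i, S i '' F)
    (d : ℝ) (hd : ∑ i, (r i) ^ d = 1)
    (O : Set (EuclideanSpace ℝ (Fin n))) (hOopen : IsOpen O) (hOne : O.Nonempty)
    (hObdd : Bornology.IsBounded O)
    (hOSC₁ : (⋃ i, S i '' O) ⊆ O)
    (hOSC₂ : ∀ i j, i ≠ j → Disjoint (S i '' O) (S j '' O))
    (hSOSC : (F ∩ O).Nonempty)
    (hHpos : 0 < μH[d] F) (hHfin : μH[d] F < ⊤) :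
    (∀ p : ℕ, Integrable (fun y => |Real.log (infDist y (frontier O))| ^ p)
      ((μH[d] F)⁻¹ • (μH[d]).restrict F)) ∧
    μH[d] (F ∩ frontier O) = 0 := by
  classical
  -- basic facts
  have hν1 : ((μH[d] F)⁻¹ • (μH[d]).restrict F) Set.univ = 1 := by
    rw [Measure.smul_apply, Measure.restrict_apply_univ, smul_eq_mul]
    exact ENNReal.inv_mul_cancel hHpos.ne' hHfin.ne
  haveI : IsFiniteMeasure ((μH[d] F)⁻¹ • (μH[d]).restrict F) :=
    ⟨by rw [hν1]; exact ENNReal.one_lt_top⟩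
  rcases Set.eq_empty_or_nonempty (frontier O) with hfr | hfrne
  · -- degenerate case: no boundary
    constructor
    · intro p
      have heq : (fun y : EuclideanSpace ℝ (Fin n) =>
          |Real.log (infDist y (frontier O))| ^ p) = fun _ => |Real.log 0| ^ p := by
        funext y; rw [hfr, infDist_empty]
      rw [heq]
      exact integrable_const _
    · rw [hfr]; simp
  -- main case
  have hd0 : 0 ≤ d := by
    by_contra hneg
    push_neg at hneg
    have h1 : ∀ i : Fin N, (1:ℝ) < r i ^ d := by
      intro i
      rw [Real.one_lt_rpow_iff_of_pos (hr i).1]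
      exact Or.inr ⟨(hr i).2, hneg⟩
    haveI : Nonempty (Fin N) := ⟨⟨0, hN⟩⟩
    have h2 : (N:ℝ) < ∑ i, r i ^ d := by
      have := Finset.sum_lt_sum_of_nonempty (Finset.univ_nonempty (α := Fin N))
        (f := fun _ : Fin N => (1:ℝ)) (g := fun i => r i ^ d) (fun i _ => h1 i)
      simpa using this
    rw [hd] at h2
    have : (1:ℝ) ≤ (N:ℝ) := by exact_mod_cast hN
    linarith
  obtain ⟨x, hxF, hxO⟩ := hSOSC
  obtain ⟨b₀, hb₀⟩ := hfrne
  obtain ⟨ε, hε, hball⟩ := Metric.isOpen_iff.1 hOopen x hxO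
  set ρ : ℝ := min (ε / 3) (1 / 2) with hρdef
  have hρ : 0 < ρ := lt_min (by linarith) (by norm_num)
  have hρ1 : ρ ≤ 1 := le_trans (min_le_right _ _) (by norm_num)
  have hball2 : ball x (2 * ρ) ⊆ O := by
    intro z hz
    apply hball
    rw [mem_ball] at hz ⊢
    have h1 : ρ ≤ ε / 3 := min_le_left _ _
    linarith
  haveI : Nonempty (Fin N) := ⟨⟨0, hN⟩⟩
  have hFinuniv : (Finset.univ : Finset (Fin N)).Nonempty := Finset.univ_nonempty
  set θ : ℝ := Finset.univ.sup' hFinuniv r with hθdef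
  have hθ : ∀ i, r i ≤ θ := fun i => Finset.le_sup' r (Finset.mem_univ i)
  have hθ1 : θ < 1 := (Finset.sup'_lt_iff hFinuniv).2 fun i _ => (hr i).2
  have hθ0 : 0 < θ := lt_of_lt_of_le (hr ⟨0,hN⟩).1 (hθ _)
  set ρmin : ℝ := Finset.univ.inf' hFinuniv r with hρmindef
  have hρm : ∀ i, ρmin ≤ r i := fun i => Finset.inf'_le r (Finset.mem_univ i)
  have hρm0 : 0 < ρmin := (Finset.lt_inf'_iff hFinuniv).2 fun i _ => (hr i).1
  have hρm1 : ρmin < 1 := lt_of_le_of_lt (hρm ⟨0,hN⟩) (hr _).2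
  -- choose the level m
  obtain ⟨m₀, hm₀⟩ : ∃ k : ℕ, θ ^ k * diam F < ρ := by
    rcases eq_or_lt_of_le (diam_nonneg (s := F)) with h | h
    · exact ⟨0, by rw [pow_zero, one_mul, ← h]; exact hρ⟩
    · obtain ⟨k, hk⟩ := exists_pow_lt_of_lt_one (div_pos hρ h) hθ1
      exact ⟨k, by rwa [lt_div_iff₀ h] at hk⟩
  set m : ℕ := m₀ + 1 with hm
  have hmθ : θ ^ m * diam F ≤ ρ := by
    have h1 : θ ^ m ≤ θ ^ m₀ := pow_le_pow_of_le_one hθ0.le hθ1.le (Nat.le_succ m₀)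
    have h2 : θ ^ m * diam F ≤ θ ^ m₀ * diam F :=
      mul_le_mul_of_nonneg_right h1 diam_nonneg
    linarith
  -- the distinguished word u
  obtain ⟨_, ⟨u, rfl⟩, xu, hxuF, hxu⟩ := subset_iUnion_words hFinv.subset m hxF
  -- notation shortcuts
  have hOsub : ∀ i, S i '' O ⊆ O := fun i =>
    le_trans (Set.subset_iUnion (fun j => S j '' O) i) hOSC₁
  have hFcl : F ⊆ closure O := attractor_subset_closure hθ1 hθ0.le (fun i => (hr i).1.le)
    hθ hsim hFcomp.isBounded hFinv.subset hOsub hxF hxO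
  have hprodpos : ∀ w : Fin m → Fin N, 0 < ((List.ofFn w).map r).prod :=
    fun w => compL_prod_pos (fun i => (hr i).1) _
  have hprodle : ∀ w : Fin m → Fin N, ((List.ofFn w).map r).prod ≤ θ ^ m := by
    intro w
    simpa using compL_prod_le (fun i => (hr i).1.le) hθ (List.ofFn w)
  have hprodge : ∀ w : Fin m → Fin N, ρmin ^ m ≤ ((List.ofFn w).map r).prod := by
    intro w
    simpa using compL_le_prod hρm0.le hρm (List.ofFn w)
  -- points of the u-cylinder are deep inside O
  have hcyl : ∀ z ∈ F, dist (compL S (List.ofFn u) z) x ≤ ρ := by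
    intro z hz
    rw [← hxu, compL_dist hsim]
    calc ((List.ofFn u).map r).prod * dist z xu
        ≤ θ ^ m * diam F :=
          mul_le_mul (hprodle u) (dist_le_diam_of_mem hFcomp.isBounded hz hxuF)
            dist_nonneg (pow_nonneg hθ0.le _)
      _ ≤ ρ := hmθ
  set γ : ℝ := ρmin ^ m with hγdef
  have hγ0 : 0 < γ := pow_pos hρm0 _
  have hγ1 : γ < 1 := pow_lt_one₀ hρm0.le hρm1 (by omega)
  set q : ℝ := ((List.ofFn u).map r).prod ^ d with hqdef
  have hq0 : 0 < q := Real.rpow_pos_of_pos (hprodpos u) d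
  have hq1 : q ≤ 1 := Real.rpow_le_one (hprodpos u).le
    (le_trans (hprodle u) (pow_le_one₀ hθ0.le hθ1.le)) hd0
  set c : ℝ := 1 - q with hcdef
  have hc0 : 0 ≤ c := by simp [hcdef]; linarith
  have hc1 : c < 1 := by simp [hcdef]; linarith
  -- sum of contraction ratios over words
  have hsum1 : ∑ w : Fin m → Fin N, ((List.ofFn w).map r).prod ^ d = 1 := by
    have h1 : ∀ w : Fin m → Fin N, ((List.ofFn w).map r).prod ^ d = ∏ j, (r (w j)) ^ d := by
      intro w
      rw [compL_ofFn_prod]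
      exact (Real.finset_prod_rpow _ _ (fun i _ => (hr _).1.le) d).symm
    simp_rw [h1]
    have h2 : ∑ w : Fin m → Fin N, ∏ j, (r (w j)) ^ d = ∏ _j : Fin m, ∑ i, (r i) ^ d := by
      rw [Finset.prod_univ_sum, Fintype.piFinset_univ]
    rw [h2, hd]
    simp
  have hsumc : ∑ w ∈ Finset.univ.erase u, ((List.ofFn w).map r).prod ^ d = c := by
    have h1 := Finset.sum_erase_add Finset.univ
      (fun w : Fin m → Fin N => ((List.ofFn w).map r).prod ^ d) (Finset.mem_univ u)
    rw [hsum1] at h1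
    simp only [hcdef, hqdef]
    linarith
  -- Hausdorff measure contraction under word maps
  have hHimg : ∀ (w : Fin m → Fin N) (A : Set (EuclideanSpace ℝ (Fin n))),
      μH[d] (compL S (List.ofFn w) '' A) ≤
        ENNReal.ofReal (((List.ofFn w).map r).prod ^ d) * μH[d] A := by
    intro w A
    have hnn : 0 ≤ ((List.ofFn w).map r).prod := (hprodpos w).le
    have hLip : LipschitzWith ⟨_, hnn⟩ (compL S (List.ofFn w)) :=
      LipschitzWith.of_dist_le_mul fun a b => (compL_dist hsim _ a b).le
    have h1 := hLip.hausdorffMeasure_image_le hd0 A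
    refine le_of_le_of_eq h1 ?_
    congr 1
    rw [← ENNReal.ofReal_rpow_of_pos (hprodpos w), ENNReal.ofReal_eq_coe_nnreal hnn]
    rfl
  -- the bad sets B k
  set B : ℕ → Set (EuclideanSpace ℝ (Fin n)) := fun k =>
    Nat.rec F (fun _ Bk => ⋃ v ∈ Finset.univ.erase u, compL S (List.ofFn v) '' Bk) k with hBdef
  have hB0 : B 0 = F := rfl
  have hBsucc : ∀ k, B (k+1) = ⋃ v ∈ Finset.univ.erase u, compL S (List.ofFn v) '' B k :=
    fun k => rfl
  have hBmeas : ∀ k, μH[d] (B k) ≤ ENNReal.ofReal (c ^ k) * μH[d] F := by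
    intro k
    induction k with
    | zero => simp [hB0]
    | succ k ih =>
      calc μH[d] (B (k+1)) ≤ ∑ v ∈ Finset.univ.erase u, μH[d] (compL S (List.ofFn v) '' B k) := by
            rw [hBsucc]; exact measure_biUnion_finset_le _ _
        _ ≤ ∑ v ∈ Finset.univ.erase u,
              ENNReal.ofReal (((List.ofFn v).map r).prod ^ d) * (ENNReal.ofReal (c^k) * μH[d] F) :=
            Finset.sum_le_sum fun v _ => le_trans (hHimg v _) (mul_le_mul_right ih _)
        _ = (∑ v ∈ Finset.univ.erase u, ENNReal.ofReal (((List.ofFn v).map r).prod ^ d)) *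
              (ENNReal.ofReal (c^k) * μH[d] F) := by rw [Finset.sum_mul]
        _ = ENNReal.ofReal c * (ENNReal.ofReal (c^k) * μH[d] F) := by
            rw [← ENNReal.ofReal_sum_of_nonneg
              (fun v _ => Real.rpow_nonneg (hprodpos v).le d), hsumc]
        _ = ENNReal.ofReal (c^(k+1)) * μH[d] F := by
            rw [← mul_assoc, ← ENNReal.ofReal_mul hc0, ← pow_succ']
  -- the exceptional shells T k
  set T : ℕ → Set (EuclideanSpace ℝ (Fin n)) := fun k =>
    {y | y ∈ F ∧ infDist y (frontier O) < ρ * γ ^ k} with hTdef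
  have hTB : ∀ k, T k ⊆ B k := by
    intro k
    induction k with
    | zero => exact fun y hy => hy.1
    | succ k ih =>
      rintro y ⟨hyF, hylt⟩
      obtain ⟨_, ⟨v, rfl⟩, z, hzF, rfl⟩ := subset_iUnion_words hFinv.subset m hyF
      by_cases hvu : v = u
      · exfalso
        subst hvu
        have hged : ∀ cc ∈ frontier O, ρ ≤ dist (compL S (List.ofFn v) z) cc := by
          intro cc hcc
          by_contra hlt
          push_neg at hlt
          have h1 : dist (compL S (List.ofFn v) z) x ≤ ρ := hcyl z hzF
          have h2 : cc ∈ ball x (2*ρ) := by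
            rw [mem_ball]
            calc dist cc x ≤ dist cc (compL S (List.ofFn v) z) + dist (compL S (List.ofFn v) z) x :=
                  dist_triangle _ _ _
              _ < ρ + ρ := by rw [dist_comm cc]; exact add_lt_add_of_lt_of_le hlt h1
              _ = 2*ρ := by ring
          have h3 : cc ∈ O := hball2 h2
          have h4 : cc ∈ O ∩ frontier O := ⟨h3, hcc⟩
          rw [hOopen.inter_frontier_eq] at h4
          exact h4
        have h5 : ρ ≤ infDist (compL S (List.ofFn v) z) (frontier O) := by
          by_contra h5'
          push_neg at h5'
          obtain ⟨cc, hcc, hdd⟩ := (infDist_lt_iff ⟨b₀, hb₀⟩).1 h5'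
          exact absurd hdd (not_lt.2 (hged cc hcc))
        have h6 : γ ^ (k+1) ≤ 1 := pow_le_one₀ hγ0.le hγ1.le
        nlinarith
      · have hvE : v ∈ Finset.univ.erase u := Finset.mem_erase.2 ⟨hvu, Finset.mem_univ v⟩
        obtain ⟨b, hbfr, hbd⟩ := (infDist_lt_iff ⟨b₀, hb₀⟩).1 hylt
        obtain ⟨b₂, rfl⟩ := compL_surj (fun i => (hr i).1) hsim (List.ofFn v) b
        have hd2 : ((List.ofFn v).map r).prod * dist z b₂ =
            dist (compL S (List.ofFn v) z) (compL S (List.ofFn v) b₂) :=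
          (compL_dist hsim _ z b₂).symm
        have hzdist : dist z b₂ < ρ * γ ^ k := by
          have h1 : ((List.ofFn v).map r).prod * dist z b₂ < ρ * γ^(k+1) := by
            rw [hd2]; exact hbd
          have h3 : (ρ*γ^k) * γ ≤ (ρ*γ^k) * ((List.ofFn v).map r).prod := by
            apply mul_le_mul_of_nonneg_left (hprodge v) (by positivity)
          have h4 : ((List.ofFn v).map r).prod * dist z b₂ <
              ((List.ofFn v).map r).prod * (ρ*γ^k) := by
            rw [mul_comm ((List.ofFn v).map r).prod (ρ*γ^k)]
            calc ((List.ofFn v).map r).prod * dist z b₂ < ρ * γ^(k+1) := h1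
              _ = (ρ*γ^k) * γ := by ring
              _ ≤ (ρ*γ^k) * ((List.ofFn v).map r).prod := h3
          exact lt_of_mul_lt_mul_left h4 (hprodpos v).le
        have hb₂O : b₂ ∉ O := by
          intro hb₂O
          have h5 : compL S (List.ofFn v) b₂ ∈ O :=
            (compL_image_subset hOsub _) ⟨b₂, hb₂O, rfl⟩
          have h6 : compL S (List.ofFn v) b₂ ∈ O ∩ frontier O := ⟨h5, hbfr⟩
          rw [hOopen.inter_frontier_eq] at h6
          exact h6
        have hzB : infDist z (frontier O) < ρ * γ^k :=
          lt_of_le_of_lt (infDist_frontier_le_dist hOopen (hFcl hzF) hb₂O) hzdist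
        rw [hBsucc]
        exact Set.mem_biUnion hvE ⟨z, ih ⟨hzF, hzB⟩, rfl⟩
  have hTmeas : ∀ k, MeasurableSet (T k) := by
    intro k
    exact hFcomp.isClosed.measurableSet.inter
      ((measurableSet_lt ((continuous_infDist_pt (frontier O)).measurable) measurable_const))
  have hνT : ∀ k, ((μH[d] F)⁻¹ • (μH[d]).restrict F) (T k) ≤ ENNReal.ofReal (c ^ k) := by
    intro k
    have hTF : T k ⊆ F := fun y hy => hy.1
    calc ((μH[d] F)⁻¹ • (μH[d]).restrict F) (T k)
        = (μH[d] F)⁻¹ * μH[d] (T k) := by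
          rw [Measure.smul_apply, Measure.restrict_apply (hTmeas k), smul_eq_mul,
            Set.inter_eq_self_of_subset_left hTF]
      _ ≤ (μH[d] F)⁻¹ * (ENNReal.ofReal (c^k) * μH[d] F) :=
          mul_le_mul_right (le_trans (measure_mono (hTB k)) (hBmeas k)) _
      _ = ENNReal.ofReal (c^k) * ((μH[d] F)⁻¹ * μH[d] F) := by ring
      _ = ENNReal.ofReal (c^k) := by
          rw [ENNReal.inv_mul_cancel hHpos.ne' hHfin.ne, mul_one]
  -- part 2 : measure zero boundary
  have hpart2 : μH[d] (F ∩ frontier O) = 0 := by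
    have hsub : ∀ k, F ∩ frontier O ⊆ T k := by
      rintro k y ⟨hyF, hyfr⟩
      exact ⟨hyF, by rw [infDist_zero_of_mem hyfr]; positivity⟩
    have hle : ∀ k, μH[d] (F ∩ frontier O) ≤ ENNReal.ofReal c ^ k * μH[d] F := by
      intro k
      calc μH[d] (F ∩ frontier O) ≤ μH[d] (B k) := measure_mono ((hsub k).trans (hTB k))
        _ ≤ ENNReal.ofReal (c^k) * μH[d] F := hBmeas k
        _ = ENNReal.ofReal c ^ k * μH[d] F := by rw [ENNReal.ofReal_pow hc0]
    have h1 : ENNReal.ofReal c < 1 := by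
      rw [← ENNReal.ofReal_one]
      exact (ENNReal.ofReal_lt_ofReal_iff one_pos).2 hc1
    have htend : Filter.Tendsto (fun k => ENNReal.ofReal c ^ k * μH[d] F)
        Filter.atTop (nhds 0) := by
      have h2 := ENNReal.tendsto_pow_atTop_nhds_zero_of_lt_one h1
      have h3 := ENNReal.Tendsto.mul_const h2 (Or.inr hHfin.ne)
      simpa using h3
    have h4 : μH[d] (F ∩ frontier O) ≤ 0 :=
      ge_of_tendsto htend (Filter.Eventually.of_forall hle)
    exact le_antisymm h4 zero_le
  refine ⟨?_, hpart2⟩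
  -- part 1 : integrability
  intro p
  set Dd : ℝ := max (diam F + dist x b₀) 1 with hDdef
  have htD : ∀ y ∈ F, infDist y (frontier O) ≤ Dd := by
    intro y hy
    calc infDist y (frontier O) ≤ dist y b₀ := infDist_le_dist_of_mem hb₀
      _ ≤ dist y x + dist x b₀ := dist_triangle _ _ _
      _ ≤ diam F + dist x b₀ := by
          have := dist_le_diam_of_mem hFcomp.isBounded hy hxF; linarith
      _ ≤ Dd := le_max_left _ _
  set A : ℝ := |Real.log ρ| + |Real.log Dd| with hAdef
  set Bc : ℝ := |Real.log γ| with hBcdef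
  have hA0 : 0 ≤ A := add_nonneg (abs_nonneg _) (abs_nonneg _)
  have hBc0 : 0 ≤ Bc := abs_nonneg _
  set a : ℕ → ℝ := fun k => A + Bc * k with hadef
  have ha0 : ∀ k, 0 ≤ a k := fun k =>
    add_nonneg hA0 (mul_nonneg hBc0 (Nat.cast_nonneg k))
  have hlogbd : ∀ t aa : ℝ, 0 < aa → aa ≤ t → t ≤ Dd →
      |Real.log t| ≤ |Real.log aa| + |Real.log Dd| := by
    intro t aa haa hat htDd
    have h1 : Real.log aa ≤ Real.log t := Real.log_le_log haa hat
    have h2 : Real.log t ≤ Real.log Dd := Real.log_le_log (lt_of_lt_of_le haa hat) htDd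
    rcases le_or_gt 0 (Real.log t) with h | h
    · rw [abs_of_nonneg h]
      have h3 : Real.log Dd ≤ |Real.log Dd| := le_abs_self _
      have h4 := abs_nonneg (Real.log aa)
      linarith
    · rw [abs_of_neg h]
      have h4 : -Real.log aa ≤ |Real.log aa| := neg_le_abs _
      have h5 := abs_nonneg (Real.log Dd)
      linarith
  have hshell : ∀ y ∈ F, ∀ j : ℕ, ρ * γ ^ j ≤ infDist y (frontier O) →
      |Real.log (infDist y (frontier O))| ≤ a j := by
    intro y hy j hj
    have h1 := hlogbd _ _ (by positivity) hj (htD y hy)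
    have h2 : |Real.log (ρ * γ^j)| ≤ |Real.log ρ| + Bc * j := by
      rw [Real.log_mul hρ.ne' (by positivity), Real.log_pow]
      calc |Real.log ρ + (j:ℕ) * Real.log γ|
          ≤ |Real.log ρ| + |(j:ℝ) * Real.log γ| := abs_add_le _ _
        _ = |Real.log ρ| + Bc * j := by rw [abs_mul, Nat.abs_cast, hBcdef]; ring
    calc |Real.log (infDist y (frontier O))|
        ≤ |Real.log (ρ*γ^j)| + |Real.log Dd| := h1
      _ ≤ (|Real.log ρ| + Bc*j) + |Real.log Dd| := by linarith
      _ = a j := by rw [hadef]; rw [hAdef]; ring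
  have hpt : ∀ y ∈ F,
      ENNReal.ofReal (|Real.log (infDist y (frontier O))| ^ p) ≤
        ENNReal.ofReal (a 0 ^ p) +
          ∑' k, Set.indicator (T k) (fun _ => ENNReal.ofReal (a (k+1) ^ p)) y := by
    intro y hy
    by_cases htz : infDist y (frontier O) = 0
    · rcases Nat.eq_zero_or_pos p with rfl | hp
      · simp only [pow_zero]
        exact le_trans (by simp) le_self_add
      · rw [htz, Real.log_zero, abs_zero, zero_pow hp.ne']
        simp
    · have ht0 : 0 < infDist y (frontier O) :=
        lt_of_le_of_ne infDist_nonneg (Ne.symm htz)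
      have hex : ∃ j : ℕ, ¬ (infDist y (frontier O) < ρ * γ ^ j) := by
        obtain ⟨j, hj⟩ := exists_pow_lt_of_lt_one (div_pos ht0 hρ) hγ1
        refine ⟨j, not_lt.2 ?_⟩
        rw [lt_div_iff₀ hρ] at hj
        nlinarith
      have hfind : ∀ i, i < Nat.find hex → infDist y (frontier O) < ρ * γ ^ i :=
        fun i hi => not_not.1 (Nat.find_min hex hi)
      have hspec : ρ * γ ^ (Nat.find hex) ≤ infDist y (frontier O) :=
        not_lt.1 (Nat.find_spec hex)
      have hlog1 : |Real.log (infDist y (frontier O))| ^ p ≤ a (Nat.find hex) ^ p :=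
        pow_le_pow_left₀ (abs_nonneg _) (hshell y hy _ hspec) p
      cases hc2 : Nat.find hex with
      | zero =>
        rw [hc2] at hlog1
        exact le_trans (ENNReal.ofReal_le_ofReal hlog1) le_self_add
      | succ j =>
        rw [hc2] at hlog1 hfind
        have hmem : y ∈ T j := ⟨hy, hfind j (Nat.lt_succ_self j)⟩
        calc ENNReal.ofReal (|Real.log (infDist y (frontier O))| ^ p)
            ≤ ENNReal.ofReal (a (j+1) ^ p) := ENNReal.ofReal_le_ofReal hlog1
          _ = Set.indicator (T j) (fun _ => ENNReal.ofReal (a (j+1)^p)) y :=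
              (Set.indicator_of_mem hmem (fun _ => ENNReal.ofReal (a (j+1)^p))).symm
          _ ≤ ∑' k, Set.indicator (T k) (fun _ => ENNReal.ofReal (a (k+1)^p)) y :=
              ENNReal.le_tsum j
          _ ≤ _ := le_add_self
  have hsummable : Summable (fun k : ℕ => a (k+1) ^ p * c ^ k) := by
    rcases eq_or_lt_of_le hc0 with hc0' | hc0pos
    · apply summable_of_ne_finset_zero (s := ({0} : Finset ℕ))
      intro k hk
      have hk0 : k ≠ 0 := by simpa using hk
      rw [← hc0', zero_pow hk0, mul_zero]
    · have hs1 : Summable (fun k : ℕ => (k:ℝ)^p * c^k) := by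
        have := summable_pow_mul_geometric_of_norm_lt_one p
          (r := c) (by rw [Real.norm_eq_abs, abs_of_pos hc0pos]; exact hc1)
        exact this
      have hs2 : Summable (fun k : ℕ => ((k+1:ℕ):ℝ)^p * c^(k+1)) :=
        (summable_nat_add_iff 1).2 hs1
      have hs3 := hs2.mul_left ((A+Bc)^p * c⁻¹)
      apply Summable.of_nonneg_of_le _ _ hs3
      · intro k
        exact mul_nonneg (pow_nonneg (ha0 _) _) (pow_nonneg hc0 _)
      · intro k
        have h4 : a (k+1) ≤ (A+Bc) * ((k:ℝ)+1) := by
          rw [hadef]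
          push_cast
          nlinarith [hA0, hBc0, Nat.cast_nonneg (α := ℝ) k]
        have h5 : a (k+1)^p ≤ ((A+Bc)*((k:ℝ)+1))^p := pow_le_pow_left₀ (ha0 _) h4 p
        calc a (k+1)^p * c^k ≤ ((A+Bc)*((k:ℝ)+1))^p * c^k :=
              mul_le_mul_of_nonneg_right h5 (pow_nonneg hc0 _)
          _ = (A+Bc)^p * c⁻¹ * (((k+1:ℕ):ℝ)^p * c^(k+1)) := by
              rw [mul_pow, pow_succ]
              push_cast
              field_simp
  have hmeasf : Measurable fun y : EuclideanSpace ℝ (Fin n) =>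
      |Real.log (infDist y (frontier O))| ^ p :=
    (Real.measurable_log.comp (continuous_infDist_pt (frontier O)).measurable).abs.pow_const p
  refine ⟨hmeasf.aestronglyMeasurable, ?_⟩
  rw [hasFiniteIntegral_iff_ofReal (Filter.Eventually.of_forall (fun y => by positivity))]
  have hFmeas : MeasurableSet F := hFcomp.isClosed.measurableSet
  have hae : ∀ᵐ y ∂((μH[d] F)⁻¹ • (μH[d]).restrict F),
      ENNReal.ofReal (|Real.log (infDist y (frontier O))| ^ p) ≤
        ENNReal.ofReal (a 0 ^ p) +
          ∑' k, Set.indicator (T k) (fun _ => ENNReal.ofReal (a (k+1) ^ p)) y :=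
    Measure.ae_smul_measure (ae_restrict_of_forall_mem hFmeas hpt) _
  calc ∫⁻ y, ENNReal.ofReal (|Real.log (infDist y (frontier O))| ^ p)
        ∂((μH[d] F)⁻¹ • (μH[d]).restrict F)
      ≤ ∫⁻ y, (ENNReal.ofReal (a 0 ^ p) +
          ∑' k, Set.indicator (T k) (fun _ => ENNReal.ofReal (a (k+1) ^ p)) y)
        ∂((μH[d] F)⁻¹ • (μH[d]).restrict F) := lintegral_mono_ae hae
    _ = ENNReal.ofReal (a 0 ^ p) * (((μH[d] F)⁻¹ • (μH[d]).restrict F) Set.univ) +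
          ∑' k, ENNReal.ofReal (a (k+1) ^ p) * (((μH[d] F)⁻¹ • (μH[d]).restrict F) (T k)) := by
        rw [lintegral_add_left measurable_const, lintegral_const,
          lintegral_tsum (fun k => (measurable_const.indicator (hTmeas k)).aemeasurable)]
        congr 1
        exact tsum_congr fun k => lintegral_indicator_const (hTmeas k) _
    _ ≤ ENNReal.ofReal (a 0 ^ p) * 1 + ∑' k, ENNReal.ofReal ((a (k+1) ^ p) * c ^ k) := by
        apply add_le_add
        · rw [hν1]
        · apply ENNReal.tsum_le_tsum
          intro k
          rw [ENNReal.ofReal_mul (pow_nonneg (ha0 _) _)]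
          exact mul_le_mul_right (hνT k) _
    _ < ⊤ := by
        rw [← ENNReal.ofReal_tsum_of_nonneg
          (fun k => mul_nonneg (pow_nonneg (ha0 _) _) (pow_nonneg hc0 _)) hsummable]
        rw [mul_one]
        exact ENNReal.add_lt_top.2 ⟨ENNReal.ofReal_lt_top, ENNReal.ofReal_lt_top⟩
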